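/- Let l ≥ 2, let i₁, …, i_l ∈ [n] be pairwise distinct and j₁, …, j_l ∈ [m] be pairwise distinct, and let L : [n]×[m] → ℝ be the weight matrix of the frustrated loop i₁−j₁−i₂−j₂−⋯−i_l−j_l−i₁: L_{i_k, j_k} = +1 for k = 1,…,l; L_{i_{k+1}, j_k} = +1 for k = 1,…,l−1; L_{i₁, j_l} = −1; and all other entries are 0. Then there exist l−1 loop-atom matrices A^{(1)}, …, A^{(l−1)} — each supported on a 2×2 block given by two distinct rows and two distinct columns, with three entries equal to +1 and one entry equal to −1 — such that L = Σ_{k=1}^{l−1} A^{(k)}. -/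

import Mathlib

open Finset

/-- A loop atom (with negative weight `-1`): a matrix supported on two distinct rows
and two distinct columns, with three supported entries equal to `+1` and one equal
to `-1`. -/
def IsLoopAtom {n m : ℕ} (A : Fin n → Fin m → ℝ) : Prop :=
  ∃ (i₁ i₂ : Fin n) (j₁ j₂ : Fin m), i₁ ≠ i₂ ∧ j₁ ≠ j₂ ∧
    ((A i₁ j₁ = -1 ∧ A i₁ j₂ = 1 ∧ A i₂ j₁ = 1 ∧ A i₂ j₂ = 1) ∨
     (A i₁ j₁ = 1 ∧ A i₁ j₂ = -1 ∧ A i₂ j₁ = 1 ∧ A i₂ j₂ = 1) ∨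
     (A i₁ j₁ = 1 ∧ A i₁ j₂ = 1 ∧ A i₂ j₁ = -1 ∧ A i₂ j₂ = 1) ∨
     (A i₁ j₁ = 1 ∧ A i₁ j₂ = 1 ∧ A i₂ j₁ = 1 ∧ A i₂ j₂ = -1)) ∧
    (∀ i j, ¬((i = i₁ ∨ i = i₂) ∧ (j = j₁ ∨ j = j₂)) → A i j = 0)

/-- A frustrated loop of length `2l` visiting the distinct visible nodes `i 0, …,
i (l-1)` and distinct hidden nodes `j 0, …, j (l-1)` alternately decomposes as a sum
of `l - 1` loop atoms.  Here indices of `Fin l` are cyclic, so `-1` denotes the last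
index, the edges `(i k, j k)` and `(i (k+1), j k)` for `k ≠ -1` carry weight `+1`,
and the closing edge `(i 0, j (-1))` carries weight `-1`. -/
theorem frustrated_loop_decomposes_into_atoms (n m l : ℕ) [NeZero l] (hl : 2 ≤ l)
    (i : Fin l → Fin n) (j : Fin l → Fin m)
    (hi : Function.Injective i) (hj : Function.Injective j)
    (L : Fin n → Fin m → ℝ)
    (hL1 : ∀ k : Fin l, L (i k) (j k) = 1)
    (hL2 : ∀ k : Fin l, k ≠ -1 → L (i (k + 1)) (j k) = 1)
    (hL3 : L (i 0) (j (-1)) = -1)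
    (hL0 : ∀ a b, (∀ k : Fin l, ¬(a = i k ∧ b = j k)) →
      (∀ k : Fin l, ¬(a = i (k + 1) ∧ b = j k)) → L a b = 0) :
    ∃ A : Fin (l - 1) → Fin n → Fin m → ℝ,
      (∀ k, IsLoopAtom (A k)) ∧ ∀ a b, L a b = ∑ k, A k a b := by
  have hneg : ((-1 : Fin l)).val = l - 1 := by
    rcases Nat.exists_eq_succ_of_ne_zero (NeZero.ne l) with ⟨k, rfl⟩
    simp [Fin.coe_neg_one]
  have hlt : ∀ k : Fin (l-1), k.1 < l := fun k => by have := k.2; omega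
  have hlt' : ∀ k : Fin (l-1), k.1 + 1 < l := fun k => by have := k.2; omega
  have hadd : ∀ (k : Fin l) (h : k.1 + 1 < l), k + 1 = ⟨k.1 + 1, h⟩ := by
    intro k h; ext; simp [Fin.add_def, Nat.mod_eq_of_lt h]
  have key : ∀ (v : ℕ) (c : ℝ), (∑ k : Fin (l-1), if (k : ℕ) = v then c else 0)
      = if v < l - 1 then c else 0 := by
    intro v c
    split_ifs with hv
    · rw [Finset.sum_eq_single ⟨v, hv⟩]
      · simp
      · intro k _ hk
        exact if_neg (fun h => hk (Fin.ext h))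
      · simp
    · apply Finset.sum_eq_zero
      intro k _
      rw [if_neg]
      have := k.2; omega
  refine ⟨fun k a b =>
      (if a = i ⟨k.1, hlt k⟩ ∧ b = j ⟨k.1, hlt k⟩ then 1 else 0)
    + (if a = i ⟨k.1+1, hlt' k⟩ ∧ b = j ⟨k.1, hlt k⟩ then 1 else 0)
    + (if a = i ⟨k.1, hlt k⟩ ∧ b = j (-1) then -1 else 0)
    + (if a = i ⟨k.1+1, hlt' k⟩ ∧ b = j (-1) then 1 else 0), ?_, ?_⟩
  · intro k
    refine ⟨i ⟨k.1, hlt k⟩, i ⟨k.1+1, hlt' k⟩, j ⟨k.1, hlt k⟩, j (-1), ?_, ?_, ?_, ?_⟩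
    · simp [hi.eq_iff, Fin.ext_iff]
    · have := k.2
      simp only [ne_eq, hj.eq_iff, Fin.ext_iff, hneg]; omega
    · refine Or.inr (Or.inl ?_)
      have hk2 := k.2
      refine ⟨?_, ?_, ?_, ?_⟩ <;>
        simp only [hi.eq_iff, hj.eq_iff, Fin.ext_iff, hneg] <;>
        norm_num <;> omega
    · intro a b hab
      have h1 : ¬(a = i ⟨k.1, hlt k⟩ ∧ b = j ⟨k.1, hlt k⟩) :=
        fun ⟨h, h'⟩ => hab ⟨Or.inl h, Or.inl h'⟩
      have h2 : ¬(a = i ⟨k.1+1, hlt' k⟩ ∧ b = j ⟨k.1, hlt k⟩) :=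
        fun ⟨h, h'⟩ => hab ⟨Or.inr h, Or.inl h'⟩
      have h3 : ¬(a = i ⟨k.1, hlt k⟩ ∧ b = j (-1)) :=
        fun ⟨h, h'⟩ => hab ⟨Or.inl h, Or.inr h'⟩
      have h4 : ¬(a = i ⟨k.1+1, hlt' k⟩ ∧ b = j (-1)) :=
        fun ⟨h, h'⟩ => hab ⟨Or.inr h, Or.inr h'⟩
      simp [h1, h2, h3, h4]
  · intro a b
    by_cases ha : ∃ p, a = i p
    · obtain ⟨p, rfl⟩ := ha
      by_cases hb : ∃ q, b = j q
      · obtain ⟨q, rfl⟩ := hb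
        simp only [hi.eq_iff, hj.eq_iff, Fin.ext_iff, hneg]
        have hp := p.2
        have hq := q.2
        by_cases hqL : (q : ℕ) = l - 1
        · have hq1 : q = -1 := by ext; omega
          by_cases hp0 : (p : ℕ) = 0
          · have hp1 : p = 0 := by ext; simp [hp0]
            have hLv : L (i p) (j q) = -1 := by rw [hp1, hq1]; exact hL3
            have e1 : ∀ k ∈ (univ : Finset (Fin (l-1))),
                ((if (p : ℕ) = (k : ℕ) ∧ (q : ℕ) = (k : ℕ) then (1:ℝ) else 0)
                + (if (p : ℕ) = (k : ℕ) + 1 ∧ (q : ℕ) = (k : ℕ) then 1 else 0)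
                + (if (p : ℕ) = (k : ℕ) ∧ (q : ℕ) = l - 1 then -1 else 0)
                + (if (p : ℕ) = (k : ℕ) + 1 ∧ (q : ℕ) = l - 1 then 1 else 0))
                = (if (k : ℕ) = 0 then (-1:ℝ) else 0) := fun k _ => by
              have hk2 := k.2
              split_ifs <;> (first | (exfalso; omega) | norm_num)
            rw [hLv, Finset.sum_congr rfl e1, key, if_pos (by omega : 0 < l - 1)]
          · by_cases hpL : (p : ℕ) = l - 1
            · have hp1 : p = -1 := by ext; omega
              have hLv : L (i p) (j q) = 1 := by rw [hp1, hq1]; exact hL1 (-1)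
              have e1 : ∀ k ∈ (univ : Finset (Fin (l-1))),
                  ((if (p : ℕ) = (k : ℕ) ∧ (q : ℕ) = (k : ℕ) then (1:ℝ) else 0)
                  + (if (p : ℕ) = (k : ℕ) + 1 ∧ (q : ℕ) = (k : ℕ) then 1 else 0)
                  + (if (p : ℕ) = (k : ℕ) ∧ (q : ℕ) = l - 1 then -1 else 0)
                  + (if (p : ℕ) = (k : ℕ) + 1 ∧ (q : ℕ) = l - 1 then 1 else 0))
                  = (if (k : ℕ) = l - 2 then (1:ℝ) else 0) := fun k _ => by
                have hk2 := k.2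
                split_ifs <;> (first | (exfalso; omega) | norm_num)
              rw [hLv, Finset.sum_congr rfl e1, key, if_pos (by omega : l - 2 < l - 1)]
            · have hZ : L (i p) (j q) = 0 := by
                apply hL0
                · intro k ⟨h1, h2⟩
                  have hk : q = k := hj h2
                  subst hk
                  have hpq : p = q := hi h1
                  have := congrArg Fin.val hpq
                  omega
                · intro k ⟨h1, h2⟩
                  have hk : q = k := hj h2
                  subst hk
                  have h3 : p = q + 1 := hi h1
                  have h4 : q + 1 = 0 := by rw [hq1]; exact neg_add_cancel _
                  rw [h4] at h3
                  rw [h3] at hp0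
                  simp at hp0
              have e1 : ∀ k ∈ (univ : Finset (Fin (l-1))),
                  ((if (p : ℕ) = (k : ℕ) ∧ (q : ℕ) = (k : ℕ) then (1:ℝ) else 0)
                  + (if (p : ℕ) = (k : ℕ) + 1 ∧ (q : ℕ) = (k : ℕ) then 1 else 0)
                  + (if (p : ℕ) = (k : ℕ) ∧ (q : ℕ) = l - 1 then -1 else 0)
                  + (if (p : ℕ) = (k : ℕ) + 1 ∧ (q : ℕ) = l - 1 then 1 else 0))
                  = (if (k : ℕ) = (p : ℕ) then (-1:ℝ) else 0)
                    + (if (k : ℕ) = (p : ℕ) - 1 then 1 else 0) := fun k _ => by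
                have hk2 := k.2
                split_ifs <;> (first | (exfalso; omega) | norm_num)
              rw [hZ, Finset.sum_congr rfl e1, Finset.sum_add_distrib, key, key,
                if_pos (by omega : (p : ℕ) < l - 1), if_pos (by omega : (p : ℕ) - 1 < l - 1)]
              ring
        · by_cases hpq : (p : ℕ) = (q : ℕ)
          · have hp1 : p = q := by ext; omega
            have hLv : L (i p) (j q) = 1 := by rw [hp1]; exact hL1 q
            have e1 : ∀ k ∈ (univ : Finset (Fin (l-1))),
                ((if (p : ℕ) = (k : ℕ) ∧ (q : ℕ) = (k : ℕ) then (1:ℝ) else 0)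
                + (if (p : ℕ) = (k : ℕ) + 1 ∧ (q : ℕ) = (k : ℕ) then 1 else 0)
                + (if (p : ℕ) = (k : ℕ) ∧ (q : ℕ) = l - 1 then -1 else 0)
                + (if (p : ℕ) = (k : ℕ) + 1 ∧ (q : ℕ) = l - 1 then 1 else 0))
                = (if (k : ℕ) = (q : ℕ) then (1:ℝ) else 0) := fun k _ => by
              have hk2 := k.2
              split_ifs <;> (first | (exfalso; omega) | norm_num)
            rw [hLv, Finset.sum_congr rfl e1, key, if_pos (by omega : (q : ℕ) < l - 1)]
          · by_cases hpq1 : (p : ℕ) = (q : ℕ) + 1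
            · have hq0' : (q : Fin l) ≠ -1 := by
                intro h
                rw [h] at hqL
                exact hqL hneg
              have hp1 : p = q + 1 := by
                rw [hadd q (by omega)]
                ext
                simpa using hpq1
              have hLv : L (i p) (j q) = 1 := by rw [hp1]; exact hL2 q hq0'
              have e1 : ∀ k ∈ (univ : Finset (Fin (l-1))),
                  ((if (p : ℕ) = (k : ℕ) ∧ (q : ℕ) = (k : ℕ) then (1:ℝ) else 0)
                  + (if (p : ℕ) = (k : ℕ) + 1 ∧ (q : ℕ) = (k : ℕ) then 1 else 0)
                  + (if (p : ℕ) = (k : ℕ) ∧ (q : ℕ) = l - 1 then -1 else 0)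
                  + (if (p : ℕ) = (k : ℕ) + 1 ∧ (q : ℕ) = l - 1 then 1 else 0))
                  = (if (k : ℕ) = (q : ℕ) then (1:ℝ) else 0) := fun k _ => by
                have hk2 := k.2
                split_ifs <;> (first | (exfalso; omega) | norm_num)
              rw [hLv, Finset.sum_congr rfl e1, key, if_pos (by omega : (q : ℕ) < l - 1)]
            · have hZ : L (i p) (j q) = 0 := by
                apply hL0
                · intro k ⟨h1, h2⟩
                  have hk : q = k := hj h2
                  subst hk
                  have h3 : p = q := hi h1
                  have := congrArg Fin.val h3
                  omega
                · intro k ⟨h1, h2⟩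
                  have hk : q = k := hj h2
                  subst hk
                  have h3 : p = q + 1 := hi h1
                  rw [hadd q (by omega)] at h3
                  rw [h3] at hpq1
                  simp at hpq1
              rw [hZ]
              symm
              apply Finset.sum_eq_zero
              intro k _
              have hk2 := k.2
              split_ifs <;> (first | (exfalso; omega) | norm_num)
      · push_neg at hb
        rw [hL0 _ _ (fun k => fun ⟨_, h⟩ => hb k h) (fun k => fun ⟨_, h⟩ => hb k h)]
        symm
        apply Finset.sum_eq_zero
        intro k _
        have b1 : b ≠ j ⟨k.1, hlt k⟩ := hb _
        have b2 : b ≠ j (-1) := hb _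
        simp [b1, b2]
    · push_neg at ha
      rw [hL0 _ _ (fun k => fun ⟨h, _⟩ => ha k h) (fun k => fun ⟨h, _⟩ => ha _ h)]
      symm
      apply Finset.sum_eq_zero
      intro k _
      have a1 : a ≠ i ⟨k.1, hlt k⟩ := ha _
      have a2 : a ≠ i ⟨k.1+1, hlt' k⟩ := ha _
      simp [a1, a2]
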